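/- Let ψ : Q → ℝ be convex, d : Q → ℝ be convex differentiable with Bregman divergence V, β ≥ 0, and let y ∈ Q be a δ̃-approximate minimizer of x ↦ ψ(x) + β·V[z](x) over Q in the sense that there exists a subgradient h of this function at y with ⟨h, x − y⟩ ≥ −δ̃ for all x ∈ Q. Then for all x ∈ Q: ψ(x) + β·V[z](x) ≥ ψ(y) + β·V[z](y) + β·V[y](x) − δ̃. -/
import Mathlib

open RealInnerProductSpace

/-- if `y` is a `δ̃`-approximate minimizer of `x ↦ ψ x + β V[z] x` over `Q`
(in the variational-inequality sense, witnessed by a subgradient `g` of `ψ` at `y`),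
then `ψ x + β V[z] x ≥ ψ y + β V[z] y + β V[y] x - δ̃` for all `x ∈ Q`. -/
theorem inexact_mirror_step
    {E : Type*} [NormedAddCommGroup E] [InnerProductSpace ℝ E] [CompleteSpace E]
    (Q : Set E) (hQ : Convex ℝ Q)
    (ψ d : E → ℝ) (d' : E → E)
    (hψconv : ConvexOn ℝ Q ψ)
    (hdconv : ConvexOn ℝ Q d)
    (hddiff : ∀ x ∈ Q, HasGradientAt d (d' x) x)
    (V : E → E → ℝ)
    (hV : ∀ z x, V z x = d x - d z - ⟪d' z, x - z⟫)
    (β : ℝ) (hβ : 0 ≤ β) (δt : ℝ) (hδt : 0 ≤ δt)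
    (z : E) (hz : z ∈ Q) (y : E) (hy : y ∈ Q)
    (happrox : ∃ g : E,
      (∀ x ∈ Q, ⟪g, x - y⟫ ≤ ψ x - ψ y) ∧
      (∀ x ∈ Q, ⟪g + β • (d' y - d' z), x - y⟫ ≥ -δt)) :
    ∀ x ∈ Q, ψ x + β * V z x ≥ ψ y + β * V z y + β * V y x - δt := by
  intro x hx
  obtain ⟨g, hg, hgv⟩ := happrox
  have h1 := hg x hx
  have h2 := hgv x hx
  have key : V z x - V z y - V y x = ⟪d' y - d' z, x - y⟫ := by
    simp [hV, inner_sub_left, inner_sub_right]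
    ring
  rw [inner_add_left, real_inner_smul_left] at h2
  nlinarith [h2, h1, key, hβ, mul_le_mul_of_nonneg_left (le_of_eq key) hβ]
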